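/- Let M(x) = Σ_{j=1}^2 a_j(x) cos(λξ_j·x) with unit vectors ξ₁ ≠ ±ξ₂, λξ_j ∈ ℤ², and smooth amplitudes a_j. Then ΛM ∇^⊥M = (λ/2) ∇^⊥(M²) − (λ/4) Σ_{j=1}^2 ξ_j^⊥ (ξ_j·∇)(a_j²) + E, where the error E is a finite sum of terms each of which either (i) contains a factor T_{1,λξ_j}[a_j] or T_{2,λξ_j}[a_j], or (ii) contains a factor that is a derivative of an amplitude times an amplitude multiplied by an oscillation cos or sin of 2λξ_j·x or of mixed phases λξ_j·x, λξ_{j'}·x with j ≠ j'. -/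

import Mathlib

noncomputable def ee (k : ℤ × ℤ) (x : ℝ × ℝ) : ℂ :=
  Complex.exp (Complex.I * Complex.ofReal ((k.1 : ℝ) * x.1 + (k.2 : ℝ) * x.2))

noncomputable def nrm (k : ℤ × ℤ) : ℝ := Real.sqrt (((k.1 : ℝ)) ^ 2 + ((k.2 : ℝ)) ^ 2)

/-- an amplitude: a trigonometric polynomial with coefficients `c` on `S` -/
noncomputable def amp (S : Finset (ℤ × ℤ)) (c : ℤ × ℤ → ℂ) (x : ℝ × ℝ) : ℂ :=
  ∑ k ∈ S, c k * ee k x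

/-- directional derivative `(u·∇)a` of an amplitude -/
noncomputable def dAmp (S : Finset (ℤ × ℤ)) (c : ℤ × ℤ → ℂ) (u : ℝ × ℝ) (x : ℝ × ℝ) : ℂ :=
  ∑ k ∈ S, Complex.I * Complex.ofReal (u.1 * (k.1 : ℝ) + u.2 * (k.2 : ℝ)) * c k * ee k x

noncomputable def phase (K : ℤ × ℤ) (x : ℝ × ℝ) : ℝ := (K.1 : ℝ) * x.1 + (K.2 : ℝ) * x.2

/-- `T_{1,λξ}[a]` -/
noncomputable def T1amp (lam : ℝ) (K : ℤ × ℤ) (S : Finset (ℤ × ℤ)) (c : ℤ × ℤ → ℂ)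
    (x : ℝ × ℝ) : ℂ :=
  ∑ k ∈ S, Complex.ofReal ((nrm (K + k) + nrm (K - k)) / 2 - lam) * c k * ee k x

/-- `T_{2,λξ}[a]` -/
noncomputable def T2amp (ξ : ℝ × ℝ) (K : ℤ × ℤ) (S : Finset (ℤ × ℤ)) (c : ℤ × ℤ → ℂ)
    (x : ℝ × ℝ) : ℂ :=
  ∑ k ∈ S, Complex.I * Complex.ofReal
    ((nrm (K + k) - nrm (K - k)) / 2 - (ξ.1 * (k.1 : ℝ) + ξ.2 * (k.2 : ℝ))) * c k * ee k x

/-- `∇^⊥ f = (-∂₂f, ∂₁f)` -/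
noncomputable def perpD (f : ℝ × ℝ → ℂ) (x : ℝ × ℝ) : ℂ × ℂ :=
  (-(fderiv ℝ f x ((0 : ℝ), (1 : ℝ))), fderiv ℝ f x ((1 : ℝ), (0 : ℝ)))

/-- the building block `M = ∑_j a_j cos(λξ_j·x)` -/
noncomputable def blockM (S : Fin 2 → Finset (ℤ × ℤ)) (c : Fin 2 → ℤ × ℤ → ℂ)
    (K : Fin 2 → ℤ × ℤ) (x : ℝ × ℝ) : ℂ :=
  ∑ j : Fin 2, amp (S j) (c j) x * Complex.ofReal (Real.cos (phase (K j) x))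

/-- `ΛM`, computed frequency by frequency -/
noncomputable def lamM (S : Fin 2 → Finset (ℤ × ℤ)) (c : Fin 2 → ℤ × ℤ → ℂ)
    (K : Fin 2 → ℤ × ℤ) (x : ℝ × ℝ) : ℂ :=
  ∑ j : Fin 2, ∑ k ∈ S j, c j k / 2 *
    (Complex.ofReal (nrm (k + K j)) * ee (k + K j) x
      + Complex.ofReal (nrm (k - K j)) * ee (k - K j) x)

section Aux

noncomputable def Lmap (k : ℤ × ℤ) : (ℝ × ℝ) →L[ℝ] ℝ :=
  ((k.1 : ℝ)) • (ContinuousLinearMap.fst ℝ ℝ ℝ) + ((k.2 : ℝ)) • (ContinuousLinearMap.snd ℝ ℝ ℝ)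

lemma Lmap_apply (k : ℤ × ℤ) (u : ℝ × ℝ) : Lmap k u = (k.1 : ℝ) * u.1 + (k.2 : ℝ) * u.2 := by
  simp [Lmap, smul_eq_mul]

noncomputable def eeD (k : ℤ × ℤ) (x : ℝ × ℝ) : (ℝ × ℝ) →L[ℝ] ℂ :=
  (Complex.I * ee k x) • (Complex.ofRealCLM.comp (Lmap k))

lemma eeD_apply (k : ℤ × ℤ) (x u : ℝ × ℝ) :
    eeD k x u = Complex.I * Complex.ofReal ((k.1 : ℝ) * u.1 + (k.2 : ℝ) * u.2) * ee k x := by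
  simp [eeD, Lmap_apply]; ring

lemma hasFDerivAt_ee (k : ℤ × ℤ) (x : ℝ × ℝ) : HasFDerivAt (ee k) (eeD k x) x := by
  have h0 : (fun x : ℝ × ℝ => (((k.1 : ℝ) * x.1 + (k.2 : ℝ) * x.2 : ℝ) : ℂ))
      = ⇑(Complex.ofRealCLM.comp (Lmap k)) := by
    funext u; simp [Lmap_apply]
  have h2 : HasFDerivAt (fun x : ℝ × ℝ => (((k.1 : ℝ) * x.1 + (k.2 : ℝ) * x.2 : ℝ) : ℂ))
      (Complex.ofRealCLM.comp (Lmap k)) x := by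
    rw [h0]; exact (Complex.ofRealCLM.comp (Lmap k)).hasFDerivAt
  have h1 := h2.const_mul Complex.I
  have h3 := ((Complex.hasDerivAt_exp
    (Complex.I * Complex.ofReal ((k.1 : ℝ) * x.1 + (k.2 : ℝ) * x.2))).hasFDerivAt.restrictScalars
      ℝ).comp x h1
  refine HasFDerivAt.congr_fderiv h3 ?_
  ext u <;>
  · simp [eeD, ee, Lmap_apply]
    ring

lemma ee_add (k K : ℤ × ℤ) (x : ℝ × ℝ) : ee (k + K) x = ee k x * ee K x := by
  rw [ee, ee, ee, ← Complex.exp_add]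
  congr 1
  push_cast [Prod.fst_add, Prod.snd_add]
  ring

lemma ee_K (K : ℤ × ℤ) (x : ℝ × ℝ) :
    ee K x = Complex.ofReal (Real.cos (phase K x))
      + Complex.I * Complex.ofReal (Real.sin (phase K x)) := by
  rw [ee, mul_comm, Complex.exp_mul_I, phase, Complex.ofReal_cos, Complex.ofReal_sin]
  ring

lemma ee_neg (K : ℤ × ℤ) (x : ℝ × ℝ) :
    ee (-K) x = Complex.ofReal (Real.cos (phase K x))
      - Complex.I * Complex.ofReal (Real.sin (phase K x)) := by
  rw [ee, mul_comm, Complex.exp_mul_I]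
  have h : (((-K).1 : ℝ) * x.1 + ((-K).2 : ℝ) * x.2 : ℝ) = -(phase K x) := by
    simp [phase, Prod.fst_neg, Prod.snd_neg]; push_cast; ring
  rw [h]
  push_cast
  rw [Complex.cos_neg, Complex.sin_neg]
  ring

lemma ee_sub (k K : ℤ × ℤ) (x : ℝ × ℝ) : ee (k - K) x = ee k x * ee (-K) x := by
  rw [show k - K = k + -K from sub_eq_add_neg k K, ee_add]

lemma L_cos (k K : ℤ × ℤ) (x : ℝ × ℝ) :
    ee (k + K) x + ee (k - K) x = 2 * (ee k x * Complex.ofReal (Real.cos (phase K x))) := by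
  rw [ee_add, ee_sub, ee_K K x, ee_neg K x]; ring

lemma L_sin (k K : ℤ × ℤ) (x : ℝ × ℝ) :
    ee (k + K) x - ee (k - K) x
      = 2 * (Complex.I * (ee k x * Complex.ofReal (Real.sin (phase K x)))) := by
  rw [ee_add, ee_sub, ee_K K x, ee_neg K x]; ring

lemma nrm_add_comm (k K : ℤ × ℤ) : nrm (k + K) = nrm (K + k) := by rw [add_comm]

lemma nrm_sub_comm (k K : ℤ × ℤ) : nrm (k - K) = nrm (K - k) := by
  rw [nrm, nrm]
  congr 1
  push_cast [Prod.fst_sub, Prod.snd_sub]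
  ring

lemma one_freq_split (lam : ℝ) (ξ : ℝ × ℝ) (K : ℤ × ℤ) (S : Finset (ℤ × ℤ))
    (c : ℤ × ℤ → ℂ) (x : ℝ × ℝ) :
    (∑ k ∈ S, c k / 2 *
      (Complex.ofReal (nrm (k + K)) * ee (k + K) x
        + Complex.ofReal (nrm (k - K)) * ee (k - K) x))
    = (lam : ℂ) * (amp S c x * Complex.ofReal (Real.cos (phase K x)))
      + dAmp S c ξ x * Complex.ofReal (Real.sin (phase K x))
      + T1amp lam K S c x * Complex.ofReal (Real.cos (phase K x))
      + T2amp ξ K S c x * Complex.ofReal (Real.sin (phase K x)) := by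
  rw [amp, dAmp, T1amp, T2amp]
  simp only [Finset.mul_sum, Finset.sum_mul, ← Finset.sum_add_distrib]
  refine Finset.sum_congr rfl fun k _ => ?_
  rw [nrm_add_comm, nrm_sub_comm]
  have hc := L_cos k K x
  have hs := L_sin k K x
  push_cast [-Complex.ofReal_sin, -Complex.ofReal_cos]
  linear_combination (((nrm (K + k) : ℂ) + (nrm (K - k) : ℂ)) / 4 * c k) * hc
    + (((nrm (K + k) : ℂ) - (nrm (K - k) : ℂ)) / 4 * c k) * hs

noncomputable def ampD (S : Finset (ℤ × ℤ)) (c : ℤ × ℤ → ℂ) (x : ℝ × ℝ) : (ℝ × ℝ) →L[ℝ] ℂ :=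
  ∑ k ∈ S, c k • eeD k x

lemma hasFDerivAt_amp (S : Finset (ℤ × ℤ)) (c : ℤ × ℤ → ℂ) (x : ℝ × ℝ) :
    HasFDerivAt (amp S c) (ampD S c x) x := by
  have := HasFDerivAt.fun_sum (u := S) (fun k _ => (hasFDerivAt_ee k x).const_mul (c k))
  exact this

lemma ampD_apply (S : Finset (ℤ × ℤ)) (c : ℤ × ℤ → ℂ) (x u : ℝ × ℝ) :
    ampD S c x u = dAmp S c u x := by
  rw [ampD, dAmp, ContinuousLinearMap.sum_apply]
  refine Finset.sum_congr rfl fun k _ => ?_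
  rw [ContinuousLinearMap.smul_apply, eeD_apply, smul_eq_mul]
  push_cast
  ring

noncomputable def coD (K : ℤ × ℤ) (x : ℝ × ℝ) : (ℝ × ℝ) →L[ℝ] ℂ :=
  ((2 : ℂ)⁻¹) • (eeD K x + eeD (-K) x)

lemma hasFDerivAt_co (K : ℤ × ℤ) (x : ℝ × ℝ) :
    HasFDerivAt (fun y => (Complex.ofReal (Real.cos (phase K y)) : ℂ)) (coD K x) x := by
  have h : (fun y => (Complex.ofReal (Real.cos (phase K y)) : ℂ))
      = fun y => (2 : ℂ)⁻¹ * (ee K y + ee (-K) y) := by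
    funext y; rw [ee_K, ee_neg]; ring
  rw [h]
  exact ((hasFDerivAt_ee K x).add (hasFDerivAt_ee (-K) x)).const_mul _
    |>.congr_fderiv (by rw [coD])

lemma coD_apply (K : ℤ × ℤ) (x u : ℝ × ℝ) :
    coD K x u = -Complex.ofReal (((K.1 : ℝ) * u.1 + (K.2 : ℝ) * u.2)) *
      Complex.ofReal (Real.sin (phase K x)) := by
  rw [coD, ContinuousLinearMap.smul_apply, ContinuousLinearMap.add_apply, eeD_apply, eeD_apply,
    ee_K, ee_neg]
  have h : (((-K).1 : ℝ) * u.1 + ((-K).2 : ℝ) * u.2 : ℝ)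
      = -((K.1 : ℝ) * u.1 + (K.2 : ℝ) * u.2) := by
    simp [Prod.fst_neg, Prod.snd_neg]; push_cast; ring
  rw [h, smul_eq_mul]
  push_cast [-Complex.ofReal_sin, -Complex.ofReal_cos]
  linear_combination (((K.1 : ℂ) * ((u.1 : ℝ) : ℂ) + (K.2 : ℂ) * ((u.2 : ℝ) : ℂ))
    * (Complex.ofReal (Real.sin (phase K x)))) * Complex.I_sq

noncomputable def blockD (S : Fin 2 → Finset (ℤ × ℤ)) (c : Fin 2 → ℤ × ℤ → ℂ)
    (K : Fin 2 → ℤ × ℤ) (x : ℝ × ℝ) : (ℝ × ℝ) →L[ℝ] ℂ :=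
  ∑ j : Fin 2, (amp (S j) (c j) x • coD (K j) x
    + Complex.ofReal (Real.cos (phase (K j) x)) • ampD (S j) (c j) x)

lemma hasFDerivAt_blockM (S : Fin 2 → Finset (ℤ × ℤ)) (c : Fin 2 → ℤ × ℤ → ℂ)
    (K : Fin 2 → ℤ × ℤ) (x : ℝ × ℝ) :
    HasFDerivAt (blockM S c K) (blockD S c K x) x :=
  HasFDerivAt.fun_sum fun j _ => (hasFDerivAt_amp (S j) (c j) x).mul (hasFDerivAt_co (K j) x)

lemma blockD_apply (S : Fin 2 → Finset (ℤ × ℤ)) (c : Fin 2 → ℤ × ℤ → ℂ)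
    (K : Fin 2 → ℤ × ℤ) (x u : ℝ × ℝ) :
    blockD S c K x u = ∑ j : Fin 2,
      (dAmp (S j) (c j) u x * Complex.ofReal (Real.cos (phase (K j) x))
        - Complex.ofReal (((K j).1 : ℝ) * u.1 + ((K j).2 : ℝ) * u.2)
          * amp (S j) (c j) x * Complex.ofReal (Real.sin (phase (K j) x))) := by
  rw [blockD, ContinuousLinearMap.sum_apply]
  refine Finset.sum_congr rfl fun j _ => ?_
  simp only [ContinuousLinearMap.add_apply, ContinuousLinearMap.smul_apply, coD_apply,
    ampD_apply, smul_eq_mul]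
  ring

lemma perpD_blockM (S : Fin 2 → Finset (ℤ × ℤ)) (c : Fin 2 → ℤ × ℤ → ℂ)
    (K : Fin 2 → ℤ × ℤ) (x : ℝ × ℝ) :
    perpD (blockM S c K) x
      = (-(blockD S c K x ((0 : ℝ), (1 : ℝ))), blockD S c K x ((1 : ℝ), (0 : ℝ))) := by
  rw [perpD, (hasFDerivAt_blockM S c K x).fderiv]

lemma perpD_blockM_sq (S : Fin 2 → Finset (ℤ × ℤ)) (c : Fin 2 → ℤ × ℤ → ℂ)
    (K : Fin 2 → ℤ × ℤ) (x : ℝ × ℝ) :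
    perpD (fun y => blockM S c K y ^ 2) x
      = ((2 : ℂ) * blockM S c K x) • perpD (blockM S c K) x := by
  have h : (fun y => blockM S c K y ^ 2) = fun y => blockM S c K y * blockM S c K y := by
    funext y; ring
  have hd := ((hasFDerivAt_blockM S c K x).fun_mul (hasFDerivAt_blockM S c K x)).congr_fderiv
    (show blockM S c K x • blockD S c K x + blockM S c K x • blockD S c K x
      = ((2 : ℂ) * blockM S c K x) • blockD S c K x by module)
  rw [perpD, perpD, h, hd.fderiv, (hasFDerivAt_blockM S c K x).fderiv]
  rw [ContinuousLinearMap.smul_apply, ContinuousLinearMap.smul_apply]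
  rw [Prod.smul_mk, smul_neg]

lemma fderiv_amp_sq (S : Finset (ℤ × ℤ)) (c : ℤ × ℤ → ℂ) (x : ℝ × ℝ) (u : ℝ × ℝ) :
    fderiv ℝ (fun y => amp S c y ^ 2) x u = 2 * amp S c x * dAmp S c u x := by
  have h : (fun y => amp S c y ^ 2) = fun y => amp S c y * amp S c y := by
    funext y; ring
  have hd := (hasFDerivAt_amp S c x).fun_mul (hasFDerivAt_amp S c x)
  rw [h, hd.fderiv]
  simp only [ContinuousLinearMap.add_apply, ContinuousLinearMap.smul_apply, ampD_apply,
    smul_eq_mul]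
  ring

lemma lamM_split (lam : ℝ) (ξ : Fin 2 → ℝ × ℝ) (S : Fin 2 → Finset (ℤ × ℤ))
    (c : Fin 2 → ℤ × ℤ → ℂ) (K : Fin 2 → ℤ × ℤ) (x : ℝ × ℝ) :
    lamM S c K x = (lam : ℂ) * blockM S c K x
      + ∑ j : Fin 2, (dAmp (S j) (c j) (ξ j) x * Complex.ofReal (Real.sin (phase (K j) x))
          + T1amp lam (K j) (S j) (c j) x * Complex.ofReal (Real.cos (phase (K j) x))
          + T2amp (ξ j) (K j) (S j) (c j) x * Complex.ofReal (Real.sin (phase (K j) x))) := by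
  rw [lamM, blockM, Finset.mul_sum, ← Finset.sum_add_distrib]
  refine Finset.sum_congr rfl fun j _ => ?_
  rw [one_freq_split lam (ξ j) (K j)]
  ring

end Aux


/-- `ΛM ∇^⊥M = (λ/2)∇^⊥(M²) - (λ/4)∑_j ξ_j^⊥(ξ_j·∇)(a_j²) + E`
where `E` is a finite sum of terms each of which either contains a factor
`T_{1,λξ_j}[a_j]` or `T_{2,λξ_j}[a_j]`, or is an oscillation (`cos`/`sin` of `2λξ_j·x`
or of mixed phases `λξ_j·x, λξ_{j'}·x`, `j ≠ j'`) times a derivative of an amplitude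
times an amplitude (or a derivative of an amplitude). -/
theorem building_block_decomposition
    (lam : ℝ) (hlam : 0 < lam)
    (ξ : Fin 2 → ℝ × ℝ) (hunit : ∀ j, (ξ j).1 ^ 2 + (ξ j).2 ^ 2 = 1)
    (hne : ξ 0 ≠ ξ 1 ∧ ξ 0 ≠ -ξ 1)
    (K : Fin 2 → ℤ × ℤ) (hK : ∀ j, (((K j).1 : ℝ), ((K j).2 : ℝ)) = lam • ξ j)
    (S : Fin 2 → Finset (ℤ × ℤ)) (c : Fin 2 → ℤ × ℤ → ℂ) :
    ∃ (N : ℕ) (t : Fin N → ℝ × ℝ → ℂ × ℂ),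
      (∀ x : ℝ × ℝ,
        lamM S c K x • perpD (blockM S c K) x
          = Complex.ofReal (lam / 2) • perpD (fun y => blockM S c K y ^ 2) x
            - Complex.ofReal (lam / 4) •
                (∑ j : Fin 2, fderiv ℝ (fun y => amp (S j) (c j) y ^ 2) x (ξ j) •
                  ((Complex.ofReal (-(ξ j).2), Complex.ofReal ((ξ j).1)) : ℂ × ℂ))
            + ∑ i, t i x)
      ∧ ∀ i : Fin N,
        -- (i) a factor T₁[a_j] or T₂[a_j]
        (∃ j : Fin 2, ∃ v : ℝ × ℝ → ℂ × ℂ,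
          (∀ x, t i x = T1amp lam (K j) (S j) (c j) x • v x)
          ∨ (∀ x, t i x = T2amp (ξ j) (K j) (S j) (c j) x • v x))
        -- (ii) an oscillatory factor times (derivative of amplitude)·(amplitude)
        ∨ (∃ osc : ℝ × ℝ → ℝ,
            ((∃ j, osc = fun x => Real.cos (2 * phase (K j) x))
              ∨ (∃ j, osc = fun x => Real.sin (2 * phase (K j) x))
              ∨ (∃ j j' : Fin 2, j ≠ j' ∧
                  (osc = (fun x => Real.cos (phase (K j) x) * Real.cos (phase (K j') x))
                  ∨ osc = (fun x => Real.sin (phase (K j) x) * Real.sin (phase (K j') x))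
                  ∨ osc = (fun x => Real.sin (phase (K j) x) * Real.cos (phase (K j') x)))))
            ∧ ∃ (g h : ℝ × ℝ → ℂ) (vec : ℂ × ℂ),
                (∃ (j : Fin 2) (u : ℝ × ℝ), g = dAmp (S j) (c j) u)
                ∧ (∃ j' : Fin 2, h = amp (S j') (c j')
                    ∨ ∃ u' : ℝ × ℝ, h = dAmp (S j') (c j') u')
                ∧ ∀ x, t i x = (Complex.ofReal (osc x) * g x * h x) • vec) := by
  have hK1 : ∀ j, (((K j).1 : ℤ) : ℝ) = lam * (ξ j).1 := fun j => by
    have h := congrArg Prod.fst (hK j); simpa [smul_eq_mul] using h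
  have hK2 : ∀ j, (((K j).2 : ℤ) : ℝ) = lam * (ξ j).2 := fun j => by
    have h := congrArg Prod.snd (hK j); simpa [smul_eq_mul] using h
  refine ⟨16, ![
    (fun x => T1amp lam (K 0) (S 0) (c 0) x •
      ((Real.cos (phase (K 0) x) : ℂ) • perpD (blockM S c K) x)),
    (fun x => T1amp lam (K 1) (S 1) (c 1) x •
      ((Real.cos (phase (K 1) x) : ℂ) • perpD (blockM S c K) x)),
    (fun x => T2amp (ξ 0) (K 0) (S 0) (c 0) x •
      ((Real.sin (phase (K 0) x) : ℂ) • perpD (blockM S c K) x)),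
    (fun x => T2amp (ξ 1) (K 1) (S 1) (c 1) x •
      ((Real.sin (phase (K 1) x) : ℂ) • perpD (blockM S c K) x)),
    (fun x => (((Real.sin (phase (K 0) x) * Real.cos (phase (K 1) x) : ℝ) : ℂ)
      * dAmp (S 0) (c 0) (ξ 0) x * dAmp (S 1) (c 1) ((0 : ℝ), (1 : ℝ)) x) •
        (((-1 : ℂ), (0 : ℂ)) : ℂ × ℂ)),
    (fun x => (((Real.sin (phase (K 0) x) * Real.cos (phase (K 1) x) : ℝ) : ℂ)
      * dAmp (S 0) (c 0) (ξ 0) x * dAmp (S 1) (c 1) ((1 : ℝ), (0 : ℝ)) x) •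
        (((0 : ℂ), (1 : ℂ)) : ℂ × ℂ)),
    (fun x => (((Real.sin (phase (K 1) x) * Real.cos (phase (K 0) x) : ℝ) : ℂ)
      * dAmp (S 1) (c 1) (ξ 1) x * dAmp (S 0) (c 0) ((0 : ℝ), (1 : ℝ)) x) •
        (((-1 : ℂ), (0 : ℂ)) : ℂ × ℂ)),
    (fun x => (((Real.sin (phase (K 1) x) * Real.cos (phase (K 0) x) : ℝ) : ℂ)
      * dAmp (S 1) (c 1) (ξ 1) x * dAmp (S 0) (c 0) ((1 : ℝ), (0 : ℝ)) x) •
        (((0 : ℂ), (1 : ℂ)) : ℂ × ℂ)),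
    (fun x => (((Real.sin (2 * phase (K 0) x) : ℝ) : ℂ)
      * dAmp (S 0) (c 0) (ξ 0) x * dAmp (S 0) (c 0) ((0 : ℝ), (1 : ℝ)) x) •
        (((-(1/2) : ℂ), (0 : ℂ)) : ℂ × ℂ)),
    (fun x => (((Real.sin (2 * phase (K 0) x) : ℝ) : ℂ)
      * dAmp (S 0) (c 0) (ξ 0) x * dAmp (S 0) (c 0) ((1 : ℝ), (0 : ℝ)) x) •
        (((0 : ℂ), (1/2 : ℂ)) : ℂ × ℂ)),
    (fun x => (((Real.sin (2 * phase (K 1) x) : ℝ) : ℂ)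
      * dAmp (S 1) (c 1) (ξ 1) x * dAmp (S 1) (c 1) ((0 : ℝ), (1 : ℝ)) x) •
        (((-(1/2) : ℂ), (0 : ℂ)) : ℂ × ℂ)),
    (fun x => (((Real.sin (2 * phase (K 1) x) : ℝ) : ℂ)
      * dAmp (S 1) (c 1) (ξ 1) x * dAmp (S 1) (c 1) ((1 : ℝ), (0 : ℝ)) x) •
        (((0 : ℂ), (1/2 : ℂ)) : ℂ × ℂ)),
    (fun x => (((Real.sin (phase (K 0) x) * Real.sin (phase (K 1) x) : ℝ) : ℂ)
      * dAmp (S 0) (c 0) (ξ 0) x * amp (S 1) (c 1) x) •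
        ((((lam * (ξ 1).2 : ℝ) : ℂ), ((-(lam * (ξ 1).1) : ℝ) : ℂ)) : ℂ × ℂ)),
    (fun x => (((Real.sin (phase (K 1) x) * Real.sin (phase (K 0) x) : ℝ) : ℂ)
      * dAmp (S 1) (c 1) (ξ 1) x * amp (S 0) (c 0) x) •
        ((((lam * (ξ 0).2 : ℝ) : ℂ), ((-(lam * (ξ 0).1) : ℝ) : ℂ)) : ℂ × ℂ)),
    (fun x => (((Real.cos (2 * phase (K 0) x) : ℝ) : ℂ)
      * dAmp (S 0) (c 0) (ξ 0) x * amp (S 0) (c 0) x) •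
        ((((-(lam / 2 * (ξ 0).2) : ℝ) : ℂ), ((lam / 2 * (ξ 0).1 : ℝ) : ℂ)) : ℂ × ℂ)),
    (fun x => (((Real.cos (2 * phase (K 1) x) : ℝ) : ℂ)
      * dAmp (S 1) (c 1) (ξ 1) x * amp (S 1) (c 1) x) •
        ((((-(lam / 2 * (ξ 1).2) : ℝ) : ℂ), ((lam / 2 * (ξ 1).1 : ℝ) : ℂ)) : ℂ × ℂ))],
    fun x => ?_, fun i => ?_⟩
  · -- main identity
    have hpy : ∀ j : Fin 2,
        ((Real.sin (phase (K j) x) : ℝ) : ℂ) ^ 2 + ((Real.cos (phase (K j) x) : ℝ) : ℂ) ^ 2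
          = 1 := fun j => by
      exact_mod_cast congrArg (Complex.ofReal) (Real.sin_sq_add_cos_sq (phase (K j) x))
    rw [lamM_split lam ξ S c K x, perpD_blockM_sq]
    simp only [Fin.sum_univ_two, Fin.sum_univ_succ, Fin.sum_univ_zero, Matrix.cons_val_zero,
      Matrix.cons_val_succ, Fin.succ_zero_eq_one, Fin.isValue]
    rw [fderiv_amp_sq, fderiv_amp_sq, perpD_blockM]
    simp only [blockD_apply, Fin.sum_univ_two, Fin.succ_zero_eq_one, Fin.isValue]
    have e1 : ∀ j : Fin 2, ((((K j).1 : ℤ) : ℝ) * ((0 : ℝ), (1 : ℝ)).1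
        + (((K j).2 : ℤ) : ℝ) * ((0 : ℝ), (1 : ℝ)).2) = lam * (ξ j).2 := fun j => by
      simp [hK2 j]
    have e2 : ∀ j : Fin 2, ((((K j).1 : ℤ) : ℝ) * ((1 : ℝ), (0 : ℝ)).1
        + (((K j).2 : ℤ) : ℝ) * ((1 : ℝ), (0 : ℝ)).2) = lam * (ξ j).1 := fun j => by
      simp [hK1 j]
    rw [e1 0, e1 1, e2 0, e2 1]
    simp only [Real.sin_two_mul, Real.cos_two_mul]
    rw [Prod.ext_iff]
    constructor
    · simp only [Prod.fst_add, Prod.snd_add, Prod.fst_sub, Prod.snd_sub, Prod.smul_fst,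
        Prod.smul_snd, Prod.fst_neg, Prod.snd_neg, smul_eq_mul, add_zero]
      push_cast [-Complex.ofReal_sin, -Complex.ofReal_cos]
      linear_combination
        ((lam : ℂ) * amp (S 0) (c 0) x * dAmp (S 0) (c 0) (ξ 0) x * (((ξ 0).2 : ℝ) : ℂ)) * hpy 0
        + ((lam : ℂ) * amp (S 1) (c 1) x * dAmp (S 1) (c 1) (ξ 1) x * (((ξ 1).2 : ℝ) : ℂ)) * hpy 1
    · simp only [Prod.fst_add, Prod.snd_add, Prod.fst_sub, Prod.snd_sub, Prod.smul_fst,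
        Prod.smul_snd, Prod.fst_neg, Prod.snd_neg, smul_eq_mul, add_zero]
      push_cast [-Complex.ofReal_sin, -Complex.ofReal_cos]
      linear_combination
        (-((lam : ℂ) * amp (S 0) (c 0) x * dAmp (S 0) (c 0) (ξ 0) x * (((ξ 0).1 : ℝ) : ℂ))) * hpy 0
        - ((lam : ℂ) * amp (S 1) (c 1) x * dAmp (S 1) (c 1) (ξ 1) x * (((ξ 1).1 : ℝ) : ℂ)) * hpy 1
  · -- structure of the error terms
    fin_cases i
    · exact Or.inl ⟨0, fun x => (Real.cos (phase (K 0) x) : ℂ) • perpD (blockM S c K) x,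
        Or.inl fun x => rfl⟩
    · exact Or.inl ⟨1, fun x => (Real.cos (phase (K 1) x) : ℂ) • perpD (blockM S c K) x,
        Or.inl fun x => rfl⟩
    · exact Or.inl ⟨0, fun x => (Real.sin (phase (K 0) x) : ℂ) • perpD (blockM S c K) x,
        Or.inr fun x => rfl⟩
    · exact Or.inl ⟨1, fun x => (Real.sin (phase (K 1) x) : ℂ) • perpD (blockM S c K) x,
        Or.inr fun x => rfl⟩
    · exact Or.inr ⟨_, Or.inr (Or.inr ⟨0, 1, by decide, Or.inr (Or.inr rfl)⟩),
        dAmp (S 0) (c 0) (ξ 0), dAmp (S 1) (c 1) ((0 : ℝ), (1 : ℝ)), ((-1 : ℂ), (0 : ℂ)),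
        ⟨0, ξ 0, rfl⟩, ⟨1, Or.inr ⟨((0 : ℝ), (1 : ℝ)), rfl⟩⟩, fun x => rfl⟩
    · exact Or.inr ⟨_, Or.inr (Or.inr ⟨0, 1, by decide, Or.inr (Or.inr rfl)⟩),
        dAmp (S 0) (c 0) (ξ 0), dAmp (S 1) (c 1) ((1 : ℝ), (0 : ℝ)), ((0 : ℂ), (1 : ℂ)),
        ⟨0, ξ 0, rfl⟩, ⟨1, Or.inr ⟨((1 : ℝ), (0 : ℝ)), rfl⟩⟩, fun x => rfl⟩
    · exact Or.inr ⟨_, Or.inr (Or.inr ⟨1, 0, by decide, Or.inr (Or.inr rfl)⟩),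
        dAmp (S 1) (c 1) (ξ 1), dAmp (S 0) (c 0) ((0 : ℝ), (1 : ℝ)), ((-1 : ℂ), (0 : ℂ)),
        ⟨1, ξ 1, rfl⟩, ⟨0, Or.inr ⟨((0 : ℝ), (1 : ℝ)), rfl⟩⟩, fun x => rfl⟩
    · exact Or.inr ⟨_, Or.inr (Or.inr ⟨1, 0, by decide, Or.inr (Or.inr rfl)⟩),
        dAmp (S 1) (c 1) (ξ 1), dAmp (S 0) (c 0) ((1 : ℝ), (0 : ℝ)), ((0 : ℂ), (1 : ℂ)),
        ⟨1, ξ 1, rfl⟩, ⟨0, Or.inr ⟨((1 : ℝ), (0 : ℝ)), rfl⟩⟩, fun x => rfl⟩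
    · exact Or.inr ⟨_, Or.inr (Or.inl ⟨0, rfl⟩),
        dAmp (S 0) (c 0) (ξ 0), dAmp (S 0) (c 0) ((0 : ℝ), (1 : ℝ)), ((-(1/2) : ℂ), (0 : ℂ)),
        ⟨0, ξ 0, rfl⟩, ⟨0, Or.inr ⟨((0 : ℝ), (1 : ℝ)), rfl⟩⟩, fun x => rfl⟩
    · exact Or.inr ⟨_, Or.inr (Or.inl ⟨0, rfl⟩),
        dAmp (S 0) (c 0) (ξ 0), dAmp (S 0) (c 0) ((1 : ℝ), (0 : ℝ)), ((0 : ℂ), (1/2 : ℂ)),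
        ⟨0, ξ 0, rfl⟩, ⟨0, Or.inr ⟨((1 : ℝ), (0 : ℝ)), rfl⟩⟩, fun x => rfl⟩
    · exact Or.inr ⟨_, Or.inr (Or.inl ⟨1, rfl⟩),
        dAmp (S 1) (c 1) (ξ 1), dAmp (S 1) (c 1) ((0 : ℝ), (1 : ℝ)), ((-(1/2) : ℂ), (0 : ℂ)),
        ⟨1, ξ 1, rfl⟩, ⟨1, Or.inr ⟨((0 : ℝ), (1 : ℝ)), rfl⟩⟩, fun x => rfl⟩
    · exact Or.inr ⟨_, Or.inr (Or.inl ⟨1, rfl⟩),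
        dAmp (S 1) (c 1) (ξ 1), dAmp (S 1) (c 1) ((1 : ℝ), (0 : ℝ)), ((0 : ℂ), (1/2 : ℂ)),
        ⟨1, ξ 1, rfl⟩, ⟨1, Or.inr ⟨((1 : ℝ), (0 : ℝ)), rfl⟩⟩, fun x => rfl⟩
    · exact Or.inr ⟨_, Or.inr (Or.inr ⟨0, 1, by decide, Or.inr (Or.inl rfl)⟩),
        dAmp (S 0) (c 0) (ξ 0), amp (S 1) (c 1),
        (((lam * (ξ 1).2 : ℝ) : ℂ), ((-(lam * (ξ 1).1) : ℝ) : ℂ)),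
        ⟨0, ξ 0, rfl⟩, ⟨1, Or.inl rfl⟩, fun x => rfl⟩
    · exact Or.inr ⟨_, Or.inr (Or.inr ⟨1, 0, by decide, Or.inr (Or.inl rfl)⟩),
        dAmp (S 1) (c 1) (ξ 1), amp (S 0) (c 0),
        (((lam * (ξ 0).2 : ℝ) : ℂ), ((-(lam * (ξ 0).1) : ℝ) : ℂ)),
        ⟨1, ξ 1, rfl⟩, ⟨0, Or.inl rfl⟩, fun x => rfl⟩
    · exact Or.inr ⟨_, Or.inl ⟨0, rfl⟩,
        dAmp (S 0) (c 0) (ξ 0), amp (S 0) (c 0),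
        (((-(lam / 2 * (ξ 0).2) : ℝ) : ℂ), ((lam / 2 * (ξ 0).1 : ℝ) : ℂ)),
        ⟨0, ξ 0, rfl⟩, ⟨0, Or.inl rfl⟩, fun x => rfl⟩
    · exact Or.inr ⟨_, Or.inl ⟨1, rfl⟩,
        dAmp (S 1) (c 1) (ξ 1), amp (S 1) (c 1),
        (((-(lam / 2 * (ξ 1).2) : ℝ) : ℂ), ((lam / 2 * (ξ 1).1 : ℝ) : ℂ)),
        ⟨1, ξ 1, rfl⟩, ⟨1, Or.inl rfl⟩, fun x => rfl⟩
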